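/- Assume d ≥ 3, λ > 0 and h > 1 − (1/(2λ)) log(1/(1 − α(d))). Then there exists a finite constant C (depending only on d, λ, h) such that for all n ≥ 1 and all realizations (ω,η), the expected number of returns to the origin under the polymer measure satisfies E_{Q^n_{0,0}}[N_n] ≤ C; in particular limsup_{n→∞} E_{Q^n_{0,0}}[N_n] < ∞. -/

import Mathlib

/- A heteropolymer in a medium with random droplets (Wüthrich, Ann. Appl. Probab. 2006).

A path in `C^{k+m}_{k,x}` is encoded by its sequence of `m` increments: at each step every
one of the `d` coordinates changes by `±1`, so an increment is an element of `Fin d → Bool`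
(`true` = `+1`, `false` = `-1`).  The uniform measure on paths corresponds to the uniform
measure on step sequences, so expectations under `P^{k+m}_{k,x}` are normalized sums over
all step sequences. -/

open MeasureTheory Filter Real

namespace Hetero

variable (d : ℕ)

/-- Step sequences of length `m`. -/
abbrev Steps (m : ℕ) := Fin m → Fin d → Bool

/-- Position (in `ℤ^d`) after `j` steps of the walk started at `x`. -/
def pos (x : Fin d → ℤ) {m : ℕ} (s : Steps d m) (j : ℕ) : Fin d → ℤ :=
  fun c => x c + ∑ i ∈ Finset.range j,
    (if hi : i < m then (if s ⟨i, hi⟩ c then 1 else -1) else 0)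

/-- `Δ_η(S_i)`: `-1` if the walk is at the origin (of `ℤ^d`) and there is a droplet there
(`η_i = 1`), and `+1` otherwise. -/
noncomputable def del (et : ℤ → ℝ) (t : ℤ) (y : Fin d → ℤ) : ℝ :=
  if y = 0 ∧ et t = 1 then -1 else 1

/-- Energy `λ ∑_{i=k+1}^{k+m} Δ_η(S_i)(ω_i + h)` of the polymer started at time `k`
at site `x`, performing the `m` steps `s`. -/
noncomputable def ham (lam h : ℝ) (om et : ℤ → ℝ) (k : ℤ) (x : Fin d → ℤ) {m : ℕ}
    (s : Steps d m) : ℝ :=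
  lam * ∑ j ∈ Finset.Icc 1 m, del d et (k + (j : ℤ)) (pos d x s j) * (om (k + (j : ℤ)) + h)

/-- Partition sum `Z^{k+m}_{k,x}(ω,η)`. -/
noncomputable def Z (lam h : ℝ) (om et : ℤ → ℝ) (k : ℤ) (x : Fin d → ℤ) (m : ℕ) : ℝ :=
  (∑ s : Steps d m, Real.exp (ham d lam h om et k x s)) / 2 ^ (d * m)

/-- Restricted partition sum `Ẑ^{k+m}_{k,x}(ω,η)` (only paths ending at the origin). -/
noncomputable def Zhat (lam h : ℝ) (om et : ℤ → ℝ) (k : ℤ) (x : Fin d → ℤ) (m : ℕ) : ℝ :=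
  (∑ s : Steps d m, Set.indicator {s : Steps d m | pos d x s m = 0}
      (fun s => Real.exp (ham d lam h om et k x s)) s) / 2 ^ (d * m)

/-- `Ψ^{k+m}_{k,x}(ω,η) = E^{k+m}_{k,x}[exp{λ ∑ (Δ_η(S_i) - 1)(ω_i + h)}]`. -/
noncomputable def Psi (lam h : ℝ) (om et : ℤ → ℝ) (k : ℤ) (x : Fin d → ℤ) (m : ℕ) : ℝ :=
  (∑ s : Steps d m, Real.exp (lam * ∑ j ∈ Finset.Icc 1 m,
      (del d et (k + (j : ℤ)) (pos d x s j) - 1) * (om (k + (j : ℤ)) + h))) / 2 ^ (d * m)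

/-- Quenched polymer probability `Q^{k+m}_{k,x}[A](ω,η)` of a path event `A`. -/
noncomputable def Qprob (lam h : ℝ) (om et : ℤ → ℝ) (k : ℤ) (x : Fin d → ℤ) (m : ℕ)
    (A : Set (Steps d m)) : ℝ :=
  (∑ s : Steps d m, Set.indicator A (fun s => Real.exp (ham d lam h om et k x s)) s) /
    (∑ s : Steps d m, Real.exp (ham d lam h om et k x s))

/-- Simple-random-walk probability `P^{k+m}_{k,x}[A]` of a path event `A` (it does not
depend on `k` and `x`, which only shift the path). -/
noncomputable def Pprob (m : ℕ) (A : Set (Steps d m)) : ℝ :=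
  (∑ s : Steps d m, Set.indicator A (fun _ => (1 : ℝ)) s) / 2 ^ (d * m)

/-- Probability that the `m`-step walk started at the origin does not revisit the origin. -/
noncomputable def noReturn (m : ℕ) : ℝ :=
  Pprob d m {s : Steps d m | ∀ i, 1 ≤ i → i ≤ m → pos d 0 s i ≠ 0}

/-- `α(d) = P^∞_{0,0}[w(i) ≠ 0 for all i ≥ 1]`: the probability that the walk never
returns to the origin.  By continuity from above it is the (decreasing) limit, i.e. the
infimum, of the finite-horizon no-return probabilities. -/
noncomputable def alpha : ℝ := ⨅ m : ℕ, noReturn d m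

/-- `N_m`: number of returns of the walk (started at the origin) to the origin in `(0, m]`. -/
def Nret (m : ℕ) (s : Steps d m) : ℕ :=
  ((Finset.Icc 1 m).filter (fun i => pos d 0 s i = 0)).card

/-- Euclidean norm of a point of `ℤ^d`. -/
noncomputable def nrm (x : Fin d → ℤ) : ℝ := Real.sqrt (∑ c, ((x c : ℝ)) ^ 2)

end Hetero

namespace Hetero


section Aux
variable (d : ℕ)

open Finset

/-- Count of step sequences satisfying a predicate. -/
noncomputable def cnt (m : ℕ) (p : Steps d m → Prop) : ℕ :=
  (@Finset.filter _ p (Classical.decPred p) Finset.univ).card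

lemma cnt_eq_card {m : ℕ} (p : Steps d m → Prop) [DecidablePred p] :
    cnt d m p = (Finset.univ.filter p).card := by
  unfold cnt
  rw [Finset.filter_congr_decidable]

lemma card_filter_eq_cnt {m : ℕ} (p : Steps d m → Prop) {inst : DecidablePred p} :
    (@Finset.filter _ p inst Finset.univ).card = cnt d m p := by
  unfold cnt
  congr 1
  ext a
  simp only [Finset.mem_filter]

lemma cnt_congr {m : ℕ} {p q : Steps d m → Prop} (h : ∀ s, p s ↔ q s) :
    cnt d m p = cnt d m q := by
  have hpq : p = q := funext fun s => propext (h s)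
  subst hpq; rfl

lemma card_steps (m : ℕ) : Fintype.card (Steps d m) = 2 ^ (d * m) := by
  simp [Fintype.card_fun, ← pow_mul, mul_comm]

lemma cnt_true (m : ℕ) : cnt d m (fun _ => True) = 2 ^ (d * m) := by
  classical
  rw [cnt_eq_card, Finset.filter_true, Finset.card_univ, card_steps]

lemma cnt_le (m : ℕ) (p : Steps d m → Prop) : cnt d m p ≤ 2 ^ (d * m) := by
  classical
  rw [cnt_eq_card]
  calc (Finset.univ.filter p).card ≤ Finset.univ.card := Finset.card_filter_le _ _
  _ = 2 ^ (d * m) := by rw [Finset.card_univ, card_steps]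

lemma cnt_mono {m : ℕ} (p q : Steps d m → Prop) (h : ∀ s, p s → q s) :
    cnt d m p ≤ cnt d m q := by
  classical
  rw [cnt_eq_card, cnt_eq_card]
  apply Finset.card_le_card
  intro s hs
  rw [Finset.mem_filter] at *
  exact ⟨hs.1, h s hs.2⟩

/-- first `t` steps -/
def cutA (t : ℕ) {n : ℕ} (s : Steps d n) : Steps d t :=
  fun i c => if h : (i : ℕ) < n then s ⟨i, h⟩ c else false

/-- steps after time `t` -/
def cutB (t : ℕ) {n : ℕ} (s : Steps d n) : Steps d (n - t) :=
  fun i c => if h : t + (i : ℕ) < n then s ⟨t + i, h⟩ c else false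

def glue {t n : ℕ} (a : Steps d t) (b : Steps d (n - t)) : Steps d n :=
  fun i c => if h : (i : ℕ) < t then a ⟨i, h⟩ c
    else if h2 : (i : ℕ) - t < n - t then b ⟨(i : ℕ) - t, h2⟩ c else false

lemma cutA_glue {t n : ℕ} (ht : t ≤ n) (a : Steps d t) (b : Steps d (n - t)) :
    cutA d t (glue d a b : Steps d n) = a := by
  funext i c
  have hi : (i : ℕ) < t := i.2
  simp only [cutA, glue, dif_pos (lt_of_lt_of_le hi ht), dif_pos hi]

lemma cutB_glue {t n : ℕ} (ht : t ≤ n) (a : Steps d t) (b : Steps d (n - t)) :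
    cutB d t (glue d a b : Steps d n) = b := by
  funext i c
  have hi : (i : ℕ) < n - t := i.2
  have h1 : t + (i : ℕ) < n := by omega
  have h2 : ¬ (t + (i : ℕ) < t) := by omega
  simp only [cutB, glue, dif_pos h1, dif_neg h2]
  have h3 : t + (i : ℕ) - t = (i : ℕ) := by omega
  simp only [h3, dif_pos hi]

lemma glue_cut {t n : ℕ} (ht : t ≤ n) (s : Steps d n) :
    glue d (cutA d t s) (cutB d t s) = s := by
  funext i c
  have hi : (i : ℕ) < n := i.2
  by_cases h : (i : ℕ) < t
  · simp only [glue, dif_pos h, cutA, dif_pos hi]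
  · have h2 : (i : ℕ) - t < n - t := by omega
    have h3 : t + ((i : ℕ) - t) < n := by omega
    simp only [glue, dif_neg h, dif_pos h2, cutB, dif_pos h3]
    congr 1
    apply Fin.ext
    simp only [Fin.val_mk]
    omega

lemma cnt_mul {n t : ℕ} (ht : t ≤ n) (p : Steps d t → Prop) (q : Steps d (n - t) → Prop) :
    cnt d n (fun s => p (cutA d t s) ∧ q (cutB d t s)) = cnt d t p * cnt d (n - t) q := by
  classical
  rw [cnt_eq_card, cnt_eq_card, cnt_eq_card]
  rw [← Finset.card_product]
  apply Finset.card_bij' (fun s _ => (cutA d t s, cutB d t s))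
    (fun pr _ => glue d pr.1 pr.2)
  · intro s hs
    rw [Finset.mem_filter] at hs
    simp only [Finset.mem_product, Finset.mem_filter, Finset.mem_univ, true_and]
    exact ⟨hs.2.1, hs.2.2⟩
  · intro pr hpr
    simp only [Finset.mem_product, Finset.mem_filter, Finset.mem_univ, true_and] at hpr
    rw [Finset.mem_filter]
    exact ⟨Finset.mem_univ _, by rw [cutA_glue d ht]; exact hpr.1,
      by rw [cutB_glue d ht]; exact hpr.2⟩
  · intro s _; exact glue_cut d ht s
  · intro pr _; exact Prod.ext (cutA_glue d ht _ _) (cutB_glue d ht _ _)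

lemma pos_cutA {t n : ℕ} (ht : t ≤ n) (s : Steps d n) (x : Fin d → ℤ) (j : ℕ) (hj : j ≤ t) :
    pos d x (cutA d t s) j = pos d x s j := by
  funext c
  unfold pos
  congr 1
  apply Finset.sum_congr rfl
  intro i hi
  rw [Finset.mem_range] at hi
  have h1 : i < t := lt_of_lt_of_le hi hj
  have h2 : i < n := lt_of_lt_of_le h1 ht
  rw [dif_pos h1, dif_pos h2]
  simp only [cutA, dif_pos h2]

lemma pos_tail {t n : ℕ} (ht : t ≤ n) (s : Steps d n) (j : ℕ) (hj : j ≤ n - t)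
    (x y : Fin d → ℤ) (c : Fin d) :
    pos d y (cutB d t s) j c - y c = pos d x s (t + j) c - pos d x s t c := by
  unfold pos
  rw [Finset.sum_range_add]
  have h1 : ∀ i ∈ Finset.range j,
      (if hi : i < n - t then (if cutB d t s ⟨i, hi⟩ c then (1:ℤ) else -1) else 0)
      = (if hi : t + i < n then (if s ⟨t + i, hi⟩ c then (1:ℤ) else -1) else 0) := by
    intro i hi
    rw [Finset.mem_range] at hi
    have h2 : i < n - t := lt_of_lt_of_le hi hj
    have h3 : t + i < n := by omega
    rw [dif_pos h2, dif_pos h3]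
    simp only [cutB, dif_pos h3]
  rw [Finset.sum_congr rfl h1]
  ring

lemma pos_tail_eq {t n : ℕ} (ht : t ≤ n) (s : Steps d n) (h0 : pos d 0 s t = 0)
    (j : ℕ) (hj : j ≤ n - t) :
    pos d 0 (cutB d t s) j = pos d 0 s (t + j) := by
  funext c
  have := pos_tail d ht s j hj 0 0 c
  have h0c : pos d 0 s t c = 0 := by rw [h0]; rfl
  simp only [Pi.zero_apply] at this
  omega

lemma card_bal (i j : ℕ) :
    Fintype.card {g : Fin i → Bool // (Finset.univ.filter (fun l => g l = true)).card = j}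
      = i.choose j := by
  classical
  have e : {g : Fin i → Bool // (univ.filter (fun l => g l = true)).card = j}
      ≃ {A : Finset (Fin i) // A.card = j} :=
    { toFun := fun g => ⟨univ.filter (fun l => g.1 l = true), g.2⟩
      invFun := fun A => ⟨fun l => decide (l ∈ A.1), by
        have : univ.filter (fun l => decide (l ∈ A.1) = true) = A.1 := by
          ext l; simp
        rw [this]; exact A.2⟩
      left_inv := fun g => by
        apply Subtype.ext; funext l; simp
      right_inv := fun A => by
        apply Subtype.ext
        ext l; simp }
  rw [Fintype.card_congr e, Fintype.card_subtype]
  have : (univ : Finset (Finset (Fin i))).filter (fun A => A.card = j)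
      = Finset.powersetCard j univ := by
    rw [Finset.powersetCard_eq_filter, Finset.powerset_univ]
  rw [this, Finset.card_powersetCard, Finset.card_univ, Fintype.card_fin]

lemma bal_sum_eq (i : ℕ) (g : Fin i → Bool) :
    (∑ l : Fin i, (if g l then (1:ℤ) else -1))
      = 2 * ((univ.filter (fun l => g l = true)).card : ℤ) - i := by
  classical
  have h1 : ∀ l : Fin i, (if g l then (1:ℤ) else -1)
      = 2 * (if g l = true then (1:ℤ) else 0) - 1 := by
    intro l; by_cases h : g l <;> simp [h]
  rw [Finset.sum_congr rfl (fun l _ => h1 l), Finset.sum_sub_distrib, ← Finset.mul_sum,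
    Finset.sum_boole, Finset.sum_const, Finset.card_univ, Fintype.card_fin]
  simp

lemma bal_iff (i : ℕ) (g : Fin i → Bool) :
    (∑ l : Fin i, (if g l then (1:ℤ) else -1)) = 0
      ↔ 2 * (univ.filter (fun l => g l = true)).card = i := by
  classical
  rw [bal_sum_eq]
  constructor <;> intro h <;> omega

lemma card_bal_sum (i : ℕ) :
    Fintype.card {g : Fin i → Bool // (∑ l : Fin i, (if g l then (1:ℤ) else -1)) = 0}
      = if 2 ∣ i then Nat.centralBinom (i / 2) else 0 := by
  classical
  split_ifs with h
  · obtain ⟨j, rfl⟩ := h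
    have e : {g : Fin (2*j) → Bool // (∑ l : Fin (2*j), (if g l then (1:ℤ) else -1)) = 0}
        ≃ {g : Fin (2*j) → Bool // (univ.filter (fun l => g l = true)).card = j} := by
      apply Equiv.subtypeEquivRight
      intro g
      rw [bal_iff]
      constructor <;> intro h <;> omega
    have h2 : 2 * j / 2 = j := by omega
    rw [Fintype.card_congr e, card_bal, Nat.centralBinom, h2]
  · rw [Fintype.card_eq_zero_iff]
    constructor
    intro g
    exfalso
    have := (bal_iff i g.1).mp g.2
    omega

lemma cb_sq_succ : ∀ j : ℕ, 4 * (Nat.centralBinom (j+1))^2 * (2*(j+1)+1) ≤ 3 * 16^(j+1) := by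
  intro j
  induction j with
  | zero =>
    rw [show Nat.centralBinom 1 = 2 from rfl]
    norm_num
  | succ j IH =>
    have key := Nat.succ_mul_centralBinom_succ (j+1)
    have keyR : ((j:ℝ) + 2) * (Nat.centralBinom (j+2) : ℝ)
        = 2 * (2*((j:ℝ)+1) + 1) * (Nat.centralBinom (j+1) : ℝ) := by
      have := congrArg (fun x : ℕ => (x : ℝ)) key
      push_cast at this ⊢
      linarith [this]
    have IHR : 4 * (Nat.centralBinom (j+1) : ℝ)^2 * (2*((j:ℝ)+1)+1) ≤ 3 * 16^(j+1) := by
      exact_mod_cast IH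
    have goalR : 4 * (Nat.centralBinom (j+2) : ℝ)^2 * (2*((j:ℝ)+2)+1) ≤ 3 * 16^(j+2) := by
      have hpos : (0:ℝ) < ((j:ℝ)+2)^2 := by positivity
      refine le_of_mul_le_mul_right ?_ hpos
      have e1 : 4 * (Nat.centralBinom (j+2) : ℝ)^2 * (2*((j:ℝ)+2)+1) * ((j:ℝ)+2)^2
          = 4 * (((j:ℝ)+2) * (Nat.centralBinom (j+2) : ℝ))^2 * (2*(j:ℝ)+5) := by ring
      rw [e1, keyR]
      have e2 : 4 * (2 * (2*((j:ℝ)+1) + 1) * (Nat.centralBinom (j+1) : ℝ))^2 * (2*(j:ℝ)+5)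
          = (4 * (2*(j:ℝ)+3) * (2*(j:ℝ)+5)) * (4 * (Nat.centralBinom (j+1) : ℝ)^2 * (2*((j:ℝ)+1)+1)) := by
        ring
      rw [e2]
      have e4 : 4 * (2*(j:ℝ)+3) * (2*(j:ℝ)+5) ≤ 16*((j:ℝ)+2)^2 := by nlinarith [sq_nonneg ((j:ℝ))]
      calc (4 * (2*(j:ℝ)+3) * (2*(j:ℝ)+5)) * (4 * (Nat.centralBinom (j+1) : ℝ)^2 * (2*((j:ℝ)+1)+1))
          ≤ (4 * (2*(j:ℝ)+3) * (2*(j:ℝ)+5)) * (3 * 16^(j+1)) :=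
            mul_le_mul_of_nonneg_left IHR (by positivity)
        _ ≤ (16*((j:ℝ)+2)^2) * (3 * 16^(j+1)) :=
            mul_le_mul_of_nonneg_right e4 (by positivity)
        _ = 3 * 16^(j+2) * ((j:ℝ)+2)^2 := by ring
    exact_mod_cast goalR

lemma cb_sq {j : ℕ} (hj : 1 ≤ j) : 4 * (Nat.centralBinom j)^2 * (2*j+1) ≤ 3 * 16^j := by
  obtain ⟨i, rfl⟩ : ∃ i, j = i + 1 := ⟨j - 1, by omega⟩
  exact cb_sq_succ i

noncomputable def q (j : ℕ) : ℝ := (Nat.centralBinom j : ℝ) / 4^j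

lemma q_nonneg (j : ℕ) : 0 ≤ q j := by unfold q; positivity

lemma q_sq {j : ℕ} (hj : 1 ≤ j) : q j ^ 2 ≤ 3 / (4*(2*(j:ℝ)+1)) := by
  have h := cb_sq hj
  have hR : 4 * (Nat.centralBinom j : ℝ)^2 * (2*(j:ℝ)+1) ≤ 3 * 16^j := by exact_mod_cast h
  unfold q
  rw [div_pow, div_le_div_iff₀ (by positivity) (by positivity)]
  have h16 : ((4:ℝ)^j)^2 = 16^j := by
    rw [← pow_mul, mul_comm, pow_mul]; norm_num
  rw [h16]
  nlinarith [hR]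

noncomputable def tfn (j : ℕ) : ℝ := 1 / Real.sqrt (2*(j:ℝ) - 1)

lemma q_cube {j : ℕ} (hj : 1 ≤ j) :
    q j ^ 3 ≤ (3 * Real.sqrt 3 / 8) * (tfn j - tfn (j+1)) := by
  have hj1 : (1:ℝ) ≤ (j:ℝ) := by exact_mod_cast hj
  set a := Real.sqrt (2*(j:ℝ) - 1) with ha
  set b := Real.sqrt (2*(j:ℝ) + 1) with hb
  have ha2 : a^2 = 2*(j:ℝ) - 1 := Real.sq_sqrt (by linarith)
  have hb2 : b^2 = 2*(j:ℝ) + 1 := Real.sq_sqrt (by linarith)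
  have ha1 : 1 ≤ a := by
    have := Real.sqrt_le_sqrt (show (1:ℝ) ≤ 2*(j:ℝ)-1 by linarith)
    rwa [Real.sqrt_one] at this
  have hab : a ≤ b := Real.sqrt_le_sqrt (by linarith)
  have ha0 : 0 < a := by linarith
  have hb0 : 0 < b := by linarith
  have hs3 : (0:ℝ) ≤ 3 := by norm_num
  -- q j ≤ √3 / (2*b)
  have hq : q j ≤ Real.sqrt 3 / (2*b) := by
    have h1 : q j = Real.sqrt (q j ^ 2) := (Real.sqrt_sq (q_nonneg j)).symm
    have h2 : Real.sqrt (q j ^ 2) ≤ Real.sqrt (3 / (4*(2*(j:ℝ)+1))) :=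
      Real.sqrt_le_sqrt (q_sq hj)
    have h3 : Real.sqrt (3 / (4*(2*(j:ℝ)+1))) = Real.sqrt 3 / (2*b) := by
      rw [Real.sqrt_div hs3]
      congr 1
      rw [show (4:ℝ)*(2*(j:ℝ)+1) = (2*b)^2 by rw [mul_pow, hb2]; norm_num]
      rw [Real.sqrt_sq (by linarith)]
    rw [h1, ← h3]
    exact h2
  -- cube it
  have hcube : q j ^ 3 ≤ (Real.sqrt 3 / (2*b))^3 :=
    pow_le_pow_left₀ (q_nonneg j) hq 3
  have hs3' : Real.sqrt 3 ^ 2 = 3 := Real.sq_sqrt hs3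
  have hs3pos : 0 < Real.sqrt 3 := Real.sqrt_pos.mpr (by norm_num)
  have hc3 : Real.sqrt 3 ^ 3 = 3 * Real.sqrt 3 := by
    rw [pow_succ, hs3']
  have hexp : (Real.sqrt 3 / (2*b))^3 = (3 * Real.sqrt 3 / 8) * (1 / b^3) := by
    rw [div_pow, hc3, mul_pow]
    norm_num
    ring
  -- telescoping term
  have htfn : tfn j - tfn (j+1) = 1/a - 1/b := by
    unfold tfn
    rw [← ha]
    congr 2
    rw [hb]
    congr 1
    push_cast
    ring
  -- key inequality 1/b^3 ≤ 1/a - 1/b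
  have h2 : (b - a) * (a + b) = 2 := by linear_combination hb2 - ha2
  have h3 : a * b ≤ a^2 + 1 := by nlinarith [sq_nonneg (a-b)]
  have hnum4 : 3 ≤ (b^3 - a*b^2 - a) * (a+b) := by nlinarith [hb2, h3]
  have hnum : 0 ≤ b^3 - a*b^2 - a := by nlinarith [hnum4, ha0, hb0]
  have hkey : 1/b^3 ≤ 1/a - 1/b := by
    rw [div_sub_div _ _ (ne_of_gt ha0) (ne_of_gt hb0), div_le_div_iff₀ (by positivity) (by positivity)]
    nlinarith [hnum, hb0]
  calc q j ^ 3 ≤ (Real.sqrt 3 / (2*b))^3 := hcube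
    _ = (3 * Real.sqrt 3 / 8) * (1 / b^3) := hexp
    _ ≤ (3 * Real.sqrt 3 / 8) * (1/a - 1/b) := by
        apply mul_le_mul_of_nonneg_left hkey (by positivity)
    _ = (3 * Real.sqrt 3 / 8) * (tfn j - tfn (j+1)) := by rw [htfn]

lemma tfn_sum (J : ℕ) : ∑ j ∈ Finset.Icc 1 J, (tfn j - tfn (j+1)) ≤ 1 := by
  have h : ∑ j ∈ Finset.Icc 1 J, (tfn j - tfn (j+1))
      = ∑ i ∈ Finset.range J, (tfn (1+i) - tfn (1+(i+1))) := by
    rw [show Finset.Icc 1 J = Finset.Ico 1 (J+1) from rfl, Finset.sum_Ico_eq_sum_range]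
    simp only [Nat.add_sub_cancel]
    apply Finset.sum_congr rfl
    intro i _
    rw [show 1+i+1 = 1+(i+1) by omega]
  rw [h, Finset.sum_range_sub' (fun i => tfn (1+i)) J]
  have htfn1 : tfn (1+0) = 1 := by
    unfold tfn
    norm_num
  have hnn : 0 ≤ tfn (1+J) := by
    unfold tfn
    positivity
  rw [htfn1]
  linarith

lemma q_cube_sum (J : ℕ) : ∑ j ∈ Finset.Icc 1 J, q j ^ 3 ≤ 3 * Real.sqrt 3 / 8 := by
  calc ∑ j ∈ Finset.Icc 1 J, q j ^ 3
      ≤ ∑ j ∈ Finset.Icc 1 J, (3 * Real.sqrt 3 / 8) * (tfn j - tfn (j+1)) := by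
        apply Finset.sum_le_sum
        intro j hj
        rw [Finset.mem_Icc] at hj
        exact q_cube hj.1
    _ = (3 * Real.sqrt 3 / 8) * ∑ j ∈ Finset.Icc 1 J, (tfn j - tfn (j+1)) := by
        rw [Finset.mul_sum]
    _ ≤ (3 * Real.sqrt 3 / 8) * 1 := by
        apply mul_le_mul_of_nonneg_left (tfn_sum J) (by positivity)
    _ = 3 * Real.sqrt 3 / 8 := by ring

lemma sqrt3_lt : 3 * Real.sqrt 3 / 8 < 1 := by
  have h : Real.sqrt 3 < 2 := by
    rw [show (2:ℝ) = Real.sqrt 4 by rw [show (4:ℝ) = 2^2 by norm_num, Real.sqrt_sq]; norm_num]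
    exact Real.sqrt_lt_sqrt (by norm_num) (by norm_num)
  linarith


lemma Pprob_eq (m : ℕ) (p : Steps d m → Prop) :
    Pprob d m {s | p s} = (cnt d m p : ℝ) / 2^(d*m) := by
  classical
  unfold Pprob
  rw [cnt_eq_card]
  congr 1
  rw [← Finset.sum_boole]
  apply Finset.sum_congr rfl
  intro s _
  rw [Set.indicator_apply]
  by_cases h : p s <;> simp [Set.mem_setOf_eq, h]

lemma noReturn_eq (n : ℕ) :
    noReturn d n = (cnt d n (fun s => ∀ i, 1 ≤ i → i ≤ n → pos d 0 s i ≠ 0) : ℝ) / 2^(d*n) := by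
  unfold noReturn
  exact Pprob_eq d n _

lemma noReturn_nonneg (n : ℕ) : 0 ≤ noReturn d n := by
  rw [noReturn_eq]; positivity

lemma noReturn_le_one (n : ℕ) : noReturn d n ≤ 1 := by
  rw [noReturn_eq, div_le_one (by positivity)]
  calc (cnt d n _ : ℝ) ≤ ((2^(d*n) : ℕ) : ℝ) := by exact_mod_cast cnt_le d n _
    _ = 2^(d*n) := by push_cast; ring

lemma alpha_le (n : ℕ) : alpha d ≤ noReturn d n := by
  apply ciInf_le
  refine ⟨0, ?_⟩
  rintro x ⟨m, rfl⟩
  exact noReturn_nonneg d m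

/-- the counting of the hit event -/
lemma cnt_hit_i (i : ℕ) :
    cnt d i (fun a : Steps d i => pos d 0 a i = 0)
      = (if 2 ∣ i then Nat.centralBinom (i / 2) else 0)^d := by
  classical
  rw [cnt_eq_card, ← Fintype.card_subtype, ← card_bal_sum i]
  have hpos : ∀ (a : Steps d i) (c : Fin d),
      pos d 0 a i c = ∑ l : Fin i, (if a l c then (1:ℤ) else -1) := by
    intro a c
    show (0:Fin d → ℤ) c + _ = _
    rw [Pi.zero_apply, zero_add, Finset.sum_range]
    apply Finset.sum_congr rfl
    intro l _
    rw [dif_pos l.2]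
  have e : {a : Steps d i // pos d 0 a i = 0}
      ≃ (Fin d → {g : Fin i → Bool // (∑ l : Fin i, (if g l then (1:ℤ) else -1)) = 0}) := by
    refine Equiv.trans (Equiv.subtypeEquiv (Equiv.piComm (fun _ _ => Bool)) ?_)
      Equiv.subtypePiEquivPi
    intro a
    rw [funext_iff]
    constructor
    · intro h c
      have := h c
      rw [hpos a c] at this
      simpa using this
    · intro h c
      rw [Pi.zero_apply, hpos a c]
      exact h c
  rw [Fintype.card_congr e, Fintype.card_pi]
  rw [Finset.prod_const, Finset.card_univ, Fintype.card_fin]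

lemma cnt_hit {i m : ℕ} (him : i ≤ m) :
    cnt d m (fun s => pos d 0 s i = 0)
      = (if 2 ∣ i then Nat.centralBinom (i / 2) else 0)^d * 2^(d*(m-i)) := by
  have h := cnt_mul d him (fun a : Steps d i => pos d 0 a i = 0) (fun _ => True)
  rw [cnt_true, cnt_hit_i] at h
  rw [← h]
  apply cnt_congr
  intro s
  rw [pos_cutA d him s 0 i le_rfl]
  simp

lemma q_le_one {j : ℕ} (hj : 1 ≤ j) : q j ≤ 1 := by
  have h1 : q j ^ 2 ≤ 3 / (4*(2*(j:ℝ)+1)) := q_sq hj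
  have hj1 : (1:ℝ) ≤ (j:ℝ) := by exact_mod_cast hj
  have h2 : (3:ℝ) / (4*(2*(j:ℝ)+1)) ≤ 1 := by
    rw [div_le_one (by linarith)]
    linarith
  nlinarith [q_nonneg j]

lemma hit_prob_le {i m : ℕ} (hd : 3 ≤ d) (h1 : 1 ≤ i) (him : i ≤ m) :
    (cnt d m (fun s => pos d 0 s i = 0) : ℝ) / 2^(d*m)
      ≤ if 2 ∣ i then q (i/2) ^ 3 else 0 := by
  rw [cnt_hit d him]
  by_cases h2 : 2 ∣ i
  · rw [if_pos h2, if_pos h2]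
    obtain ⟨j, rfl⟩ := h2
    have hj : 1 ≤ j := by omega
    have hj2 : 2 * j / 2 = j := by omega
    rw [hj2]
    have hsplit : (2:ℝ)^(d*m) = 2^(d*(m-2*j)) * 2^(d*(2*j)) := by
      rw [← pow_add, ← Nat.mul_add]
      congr 2
      omega
    have h4 : ((2:ℝ)^(2*j))^d = 2^(d*(2*j)) := by
      rw [← pow_mul, mul_comm]
    have hq4 : ((4:ℝ))^j = 2^(2*j) := by
      rw [pow_mul]; norm_num
    have heq : ((Nat.centralBinom j ^ d * 2 ^ (d * (m - 2*j)) : ℕ) : ℝ) / 2^(d*m)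
        = q j ^ d := by
      push_cast
      rw [hsplit]
      unfold q
      rw [div_pow, hq4, h4]
      field_simp
    rw [heq]
    have := q_le_one hj
    have := q_nonneg j
    exact pow_le_pow_of_le_one (q_nonneg j) (q_le_one hj) hd
  · rw [if_neg h2, if_neg h2]
    rw [zero_pow (by omega), zero_mul]
    simp

lemma noReturn_ge (hd : 3 ≤ d) (m : ℕ) : 1 - 3*Real.sqrt 3/8 ≤ noReturn d m := by
  classical
  have hsplit : cnt d m (fun s => ∀ i, 1 ≤ i → i ≤ m → pos d 0 s i ≠ 0)
      + cnt d m (fun s => ¬ ∀ i, 1 ≤ i → i ≤ m → pos d 0 s i ≠ 0) = 2^(d*m) := by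
    rw [cnt_eq_card, cnt_eq_card, Finset.card_filter_add_card_filter_not,
      Finset.card_univ, card_steps]
  have hunion : cnt d m (fun s => ¬ ∀ i, 1 ≤ i → i ≤ m → pos d 0 s i ≠ 0)
      ≤ ∑ i ∈ Finset.Icc 1 m, cnt d m (fun s => pos d 0 s i = 0) := by
    classical
    rw [cnt_eq_card]
    refine le_trans (Finset.card_le_card (t := (Finset.Icc 1 m).biUnion
        (fun i => Finset.univ.filter (fun s : Steps d m => pos d 0 s i = 0))) ?_)
      (le_trans Finset.card_biUnion_le (Finset.sum_le_sum ?_))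
    · intro s hs
      rw [Finset.mem_filter] at hs
      have h2 := hs.2
      push_neg at h2
      obtain ⟨i, h1, h2, h3⟩ := h2
      rw [Finset.mem_biUnion]
      exact ⟨i, Finset.mem_Icc.mpr ⟨h1, h2⟩, Finset.mem_filter.mpr ⟨Finset.mem_univ _, h3⟩⟩
    · intro i _
      rw [cnt_eq_card]
  -- real bound on neg part
  have hreal : (cnt d m (fun s => ¬ ∀ i, 1 ≤ i → i ≤ m → pos d 0 s i ≠ 0) : ℝ) / 2^(d*m)
      ≤ 3*Real.sqrt 3/8 := by
    have hstep1 : (cnt d m (fun s => ¬ ∀ i, 1 ≤ i → i ≤ m → pos d 0 s i ≠ 0) : ℝ) / 2^(d*m)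
        ≤ ∑ i ∈ Finset.Icc 1 m, (cnt d m (fun s => pos d 0 s i = 0) : ℝ) / 2^(d*m) := by
      rw [← Finset.sum_div]
      apply div_le_div_of_nonneg_right ?_ (by positivity)
      exact_mod_cast hunion
    have hstep2 : ∑ i ∈ Finset.Icc 1 m, (cnt d m (fun s => pos d 0 s i = 0) : ℝ) / 2^(d*m)
        ≤ ∑ i ∈ Finset.Icc 1 m, (if 2 ∣ i then q (i/2) ^ 3 else 0) := by
      apply Finset.sum_le_sum
      intro i hi
      rw [Finset.mem_Icc] at hi
      exact hit_prob_le d hd hi.1 hi.2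
    have hstep3 : ∑ i ∈ Finset.Icc 1 m, (if 2 ∣ i then q (i/2) ^ 3 else 0)
        = ∑ j ∈ Finset.Icc 1 (m/2), q j ^ 3 := by
      rw [← Finset.sum_filter]
      rw [show (Finset.Icc 1 m).filter (fun i => 2 ∣ i)
          = (Finset.Icc 1 (m/2)).image (fun j => 2*j) by
        ext a
        simp only [Finset.mem_filter, Finset.mem_Icc, Finset.mem_image]
        constructor
        · rintro ⟨⟨h1, h2⟩, j, rfl⟩
          exact ⟨j, ⟨by omega, by omega⟩, rfl⟩
        · rintro ⟨j, ⟨h1, h2⟩, rfl⟩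
          exact ⟨⟨by omega, by omega⟩, ⟨j, rfl⟩⟩]
      rw [Finset.sum_image (by intro a _ b _ h; simp only at h; omega)]
      apply Finset.sum_congr rfl
      intro j _
      rw [show 2*j/2 = j by omega]
    calc (cnt d m (fun s => ¬ ∀ i, 1 ≤ i → i ≤ m → pos d 0 s i ≠ 0) : ℝ) / 2^(d*m)
        ≤ ∑ j ∈ Finset.Icc 1 (m/2), q j ^ 3 := by
          rw [← hstep3]; exact le_trans hstep1 hstep2
      _ ≤ 3*Real.sqrt 3/8 := q_cube_sum (m/2)
  have h2m : (0:ℝ) < 2^(d*m) := by positivity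
  have hcnt : (cnt d m (fun s => ∀ i, 1 ≤ i → i ≤ m → pos d 0 s i ≠ 0) : ℝ)
      = 2^(d*m) - cnt d m (fun s => ¬ ∀ i, 1 ≤ i → i ≤ m → pos d 0 s i ≠ 0) := by
    have hc := congrArg (fun x : ℕ => (x : ℝ)) hsplit
    push_cast at hc
    linarith
  rw [noReturn_eq, le_div_iff₀ h2m, hcnt]
  rw [div_le_iff₀ h2m] at hreal
  have e : (1 - 3*Real.sqrt 3/8) * 2^(d*m) = 2^(d*m) - 3*Real.sqrt 3/8 * 2^(d*m) := by ring
  rw [e]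
  linarith

lemma alpha_ge (hd : 3 ≤ d) : 1 - 3*Real.sqrt 3/8 ≤ alpha d :=
  le_ciInf (fun n => noReturn_ge d hd n)

lemma alpha_pos (hd : 3 ≤ d) : 0 < alpha d :=
  lt_of_lt_of_le (by linarith [sqrt3_lt]) (alpha_ge d hd)

lemma alpha_le_one : alpha d ≤ 1 :=
  le_trans (alpha_le d 0) (noReturn_le_one d 0)

lemma alpha_lt_one (hd : 3 ≤ d) : alpha d < 1 := by
  apply lt_of_le_of_lt (alpha_le d 2)
  rw [noReturn_eq]
  rw [div_lt_one (by positivity)]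
  have hcnt : cnt d 2 (fun s => ∀ i, 1 ≤ i → i ≤ 2 → pos d 0 s i ≠ 0) < 2^(d*2) := by
    classical
    rw [cnt_eq_card]
    rw [← card_steps d 2, ← Finset.card_univ]
    apply Finset.card_lt_card
    rw [Finset.ssubset_iff_of_subset (Finset.filter_subset _ _)]
    refine ⟨(fun i _ => decide ((i:ℕ) = 0)), Finset.mem_univ _, ?_⟩
    rw [Finset.mem_filter]
    push_neg
    intro _
    refine ⟨2, by norm_num, by norm_num, ?_⟩
    funext c
    show (0:Fin d → ℤ) c + _ = _
    rw [Pi.zero_apply, zero_add]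
    rw [Finset.sum_range_succ, Finset.sum_range_succ, Finset.sum_range_zero]
    norm_num
  calc (cnt d 2 _ : ℝ) < ((2^(d*2) : ℕ) : ℝ) := by exact_mod_cast hcnt
    _ = 2^(d*2) := by push_cast; ring

lemma cnt_mul_left {n t : ℕ} (ht : t ≤ n) (p : Steps d t → Prop) :
    cnt d n (fun s => p (cutA d t s)) = cnt d t p * 2^(d*(n-t)) := by
  rw [← cnt_true d (n-t), ← cnt_mul d ht p (fun _ => True)]
  apply cnt_congr
  intro s
  simp

lemma Nret_le (n : ℕ) (s : Steps d n) : Nret d n s ≤ n := by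
  unfold Nret
  calc _ ≤ (Finset.Icc 1 n).card := Finset.card_filter_le _ _
    _ = n := by rw [Nat.card_Icc]; omega

lemma exists_first_return {n : ℕ} (s : Steps d n) (h : 1 ≤ Nret d n s) :
    ∃ t, (1 ≤ t ∧ t ≤ n ∧ pos d 0 s t = 0) ∧ ∀ i, 1 ≤ i → i < t → pos d 0 s i ≠ 0 := by
  unfold Nret at h
  have hne : ((Finset.Icc 1 n).filter (fun i => pos d 0 s i = 0)).Nonempty := by
    rw [← Finset.card_pos]
    omega
  set t := Finset.min' _ hne with htdef
  have htmem := Finset.min'_mem _ hne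
  rw [Finset.mem_filter, Finset.mem_Icc] at htmem
  refine ⟨t, ⟨htmem.1.1, htmem.1.2, htmem.2⟩, ?_⟩
  intro i h1 h2 h3
  have hle : t ≤ i := Finset.min'_le _ i (by
    rw [Finset.mem_filter, Finset.mem_Icc]
    exact ⟨⟨h1, le_trans (le_of_lt h2) htmem.1.2⟩, h3⟩)
  omega

lemma Nret_decomp {n t : ℕ} (s : Steps d n) (ht1 : 1 ≤ t) (htn : t ≤ n)
    (h0 : pos d 0 s t = 0) (hmin : ∀ i, 1 ≤ i → i < t → pos d 0 s i ≠ 0) :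
    Nret d n s ≤ 1 + Nret d (n-t) (cutB d t s) := by
  unfold Nret
  have hsub : (Finset.Icc 1 n).filter (fun i => pos d 0 s i = 0) ⊆
      insert t (((Finset.Icc 1 (n-t)).filter
        (fun j => pos d 0 (cutB d t s) j = 0)).image (fun j => t + j)) := by
    intro i hi
    rw [Finset.mem_filter, Finset.mem_Icc] at hi
    rcases lt_trichotomy i t with h | h | h
    · exact absurd hi.2 (hmin i hi.1.1 h)
    · rw [h]; exact Finset.mem_insert_self _ _
    · apply Finset.mem_insert_of_mem
      rw [Finset.mem_image]
      refine ⟨i - t, ?_, by omega⟩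
      rw [Finset.mem_filter, Finset.mem_Icc]
      refine ⟨⟨by omega, by omega⟩, ?_⟩
      rw [pos_tail_eq d htn s h0 (i - t) (by omega)]
      rw [show t + (i - t) = i by omega]
      exact hi.2
  calc ((Finset.Icc 1 n).filter (fun i => pos d 0 s i = 0)).card
      ≤ (insert t (((Finset.Icc 1 (n-t)).filter
          (fun j => pos d 0 (cutB d t s) j = 0)).image (fun j => t + j))).card :=
        Finset.card_le_card hsub
    _ ≤ 1 + (((Finset.Icc 1 (n-t)).filter
          (fun j => pos d 0 (cutB d t s) j = 0)).image (fun j => t + j)).card := by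
        have := Finset.card_insert_le t (((Finset.Icc 1 (n-t)).filter
          (fun j => pos d 0 (cutB d t s) j = 0)).image (fun j => t + j))
        omega
    _ ≤ 1 + ((Finset.Icc 1 (n-t)).filter
          (fun j => pos d 0 (cutB d t s) j = 0)).card := by
        have := Finset.card_image_le (f := fun j => t + j)
          (s := (Finset.Icc 1 (n-t)).filter (fun j => pos d 0 (cutB d t s) j = 0))
        omega

lemma first_return_sum (n : ℕ) :
    ((∑ t ∈ Finset.Icc 1 n, cnt d t (fun a : Steps d t =>
        pos d 0 a t = 0 ∧ ∀ i, 1 ≤ i → i < t → pos d 0 a i ≠ 0) * 2^(d*(n-t)) : ℕ) : ℝ)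
      ≤ (1 - alpha d) * 2^(d*n) := by
  classical
  have key : (∑ t ∈ Finset.Icc 1 n, cnt d t (fun a : Steps d t =>
        pos d 0 a t = 0 ∧ ∀ i, 1 ≤ i → i < t → pos d 0 a i ≠ 0) * 2^(d*(n-t)))
      + cnt d n (fun s => ∀ i, 1 ≤ i → i ≤ n → pos d 0 s i ≠ 0) ≤ 2^(d*n) := by
    classical
    set H : ℕ → Finset (Steps d n) := fun t => Finset.univ.filter
      (fun s : Steps d n => pos d 0 (cutA d t s) t = 0 ∧
        ∀ i, 1 ≤ i → i < t → pos d 0 (cutA d t s) i ≠ 0) with hH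
    set A : Finset (Steps d n) := Finset.univ.filter
      (fun s : Steps d n => ∀ i, 1 ≤ i → i ≤ n → pos d 0 s i ≠ 0) with hA
    have hstep : ∀ t ∈ Finset.Icc 1 n, cnt d t (fun a : Steps d t =>
        pos d 0 a t = 0 ∧ ∀ i, 1 ≤ i → i < t → pos d 0 a i ≠ 0) * 2^(d*(n-t))
        = (H t).card := by
      intro t ht
      rw [Finset.mem_Icc] at ht
      rw [hH]
      exact ((card_filter_eq_cnt d _).trans (cnt_mul_left d ht.2 _)).symm
    have hcntA : cnt d n (fun s => ∀ i, 1 ≤ i → i ≤ n → pos d 0 s i ≠ 0) = A.card := by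
      rw [hA]
      exact (card_filter_eq_cnt d _).symm
    rw [Finset.sum_congr rfl hstep, hcntA]
    have hdisj : ∀ t ∈ Finset.Icc 1 n, ∀ t' ∈ Finset.Icc 1 n, t ≠ t' →
        Disjoint (H t) (H t') := by
      intro t ht t' ht' hne
      rw [Finset.mem_Icc] at ht ht'
      rw [Finset.disjoint_left]
      intro s hs hs'
      rw [hH] at hs hs'
      simp only [Finset.mem_filter] at hs hs'
      have e1 : pos d 0 s t = 0 := by
        rw [← pos_cutA d ht.2 s 0 t le_rfl]; exact hs.2.1
      have e1' : pos d 0 s t' = 0 := by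
        rw [← pos_cutA d ht'.2 s 0 t' le_rfl]; exact hs'.2.1
      rcases lt_or_gt_of_ne hne with h | h
      · have := hs'.2.2 t ht.1 h
        rw [pos_cutA d ht'.2 s 0 t (le_of_lt h)] at this
        exact this e1
      · have := hs.2.2 t' ht'.1 h
        rw [pos_cutA d ht.2 s 0 t' (le_of_lt h)] at this
        exact this e1'
    rw [← Finset.card_biUnion hdisj]
    have hdisj2 : Disjoint ((Finset.Icc 1 n).biUnion H) A := by
      rw [Finset.disjoint_left]
      intro s hs hs'
      simp only [Finset.mem_biUnion] at hs
      obtain ⟨t, ht, hmem⟩ := hs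
      rw [Finset.mem_Icc] at ht
      rw [hH] at hmem
      simp only [Finset.mem_filter] at hmem
      rw [hA] at hs'
      simp only [Finset.mem_filter] at hs'
      have e1 : pos d 0 s t = 0 := by
        rw [← pos_cutA d ht.2 s 0 t le_rfl]; exact hmem.2.1
      exact hs'.2 t ht.1 ht.2 e1
    rw [← Finset.card_union_of_disjoint hdisj2]
    calc _ ≤ (Finset.univ : Finset (Steps d n)).card :=
          Finset.card_le_card (Finset.subset_univ _)
      _ = 2^(d*n) := by rw [Finset.card_univ, card_steps]
  -- to reals
  have hcntA : (cnt d n (fun s => ∀ i, 1 ≤ i → i ≤ n → pos d 0 s i ≠ 0) : ℝ)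
      = noReturn d n * 2^(d*n) := by
    rw [noReturn_eq]
    field_simp
  have hkeyR := congrArg (fun x : ℕ => (x : ℝ)) (Nat.add_sub_cancel' key).symm
  have hcast : ((∑ t ∈ Finset.Icc 1 n, cnt d t (fun a : Steps d t =>
        pos d 0 a t = 0 ∧ ∀ i, 1 ≤ i → i < t → pos d 0 a i ≠ 0) * 2^(d*(n-t)) : ℕ) : ℝ)
      ≤ 2^(d*n) - noReturn d n * 2^(d*n) := by
    have h1 : ((∑ t ∈ Finset.Icc 1 n, cnt d t (fun a : Steps d t =>
        pos d 0 a t = 0 ∧ ∀ i, 1 ≤ i → i < t → pos d 0 a i ≠ 0) * 2^(d*(n-t)) : ℕ) : ℝ)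
        + (cnt d n (fun s => ∀ i, 1 ≤ i → i ≤ n → pos d 0 s i ≠ 0) : ℝ) ≤ 2^(d*n) := by
      exact_mod_cast key
    rw [hcntA] at h1
    linarith
  calc _ ≤ (2:ℝ)^(d*n) - noReturn d n * 2^(d*n) := hcast
    _ ≤ 2^(d*n) - alpha d * 2^(d*n) := by
        have := alpha_le d n
        have h2 : (0:ℝ) ≤ 2^(d*n) := by positivity
        nlinarith
    _ = (1 - alpha d) * 2^(d*n) := by ring

lemma renewal (k : ℕ) : ∀ n : ℕ,
    (cnt d n (fun s => k ≤ Nret d n s) : ℝ) ≤ (1 - alpha d)^k * 2^(d*n) := by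
  induction k with
  | zero =>
    intro n
    rw [pow_zero, one_mul]
    calc (cnt d n _ : ℝ) ≤ ((2^(d*n) : ℕ) : ℝ) := by exact_mod_cast cnt_le d n _
      _ = 2^(d*n) := by push_cast; ring
  | succ k IH =>
    intro n
    have h1a : 0 ≤ 1 - alpha d := by linarith [alpha_le_one d]
    have main : cnt d n (fun s => k+1 ≤ Nret d n s)
        ≤ ∑ t ∈ Finset.Icc 1 n, cnt d t (fun a : Steps d t =>
            pos d 0 a t = 0 ∧ ∀ i, 1 ≤ i → i < t → pos d 0 a i ≠ 0)
          * cnt d (n-t) (fun b => k ≤ Nret d (n-t) b) := by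
      classical
      rw [cnt_eq_card]
      refine le_trans (Finset.card_le_card (t := (Finset.Icc 1 n).biUnion (fun t =>
          Finset.univ.filter (fun s : Steps d n => (pos d 0 (cutA d t s) t = 0 ∧
            ∀ i, 1 ≤ i → i < t → pos d 0 (cutA d t s) i ≠ 0)
            ∧ k ≤ Nret d (n-t) (cutB d t s)))) ?_)
        (le_trans Finset.card_biUnion_le (Finset.sum_le_sum ?_))
      · intro s hs
        simp only [Finset.mem_filter] at hs
        have hk1 := hs.2
        obtain ⟨t, ⟨ht1, htn, ht0⟩, hmin⟩ := exists_first_return d s (by omega)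
        simp only [Finset.mem_biUnion]
        refine ⟨t, Finset.mem_Icc.mpr ⟨ht1, htn⟩, ?_⟩
        simp only [Finset.mem_filter]
        refine ⟨Finset.mem_univ _, ⟨?_, ?_⟩, ?_⟩
        · rw [pos_cutA d htn s 0 t le_rfl]; exact ht0
        · intro i hi1 hit
          rw [pos_cutA d htn s 0 i (le_of_lt hit)]
          exact hmin i hi1 hit
        · have := Nret_decomp d s ht1 htn ht0 hmin
          omega
      · intro t ht
        rw [Finset.mem_Icc] at ht
        exact le_of_eq ((card_filter_eq_cnt d _).trans (cnt_mul d ht.2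
          (fun a : Steps d t => pos d 0 a t = 0 ∧ ∀ i, 1 ≤ i → i < t → pos d 0 a i ≠ 0)
          (fun b : Steps d (n-t) => k ≤ Nret d (n-t) b)))
    -- pass to the reals
    have mainR : (cnt d n (fun s => k+1 ≤ Nret d n s) : ℝ)
        ≤ ∑ t ∈ Finset.Icc 1 n, (cnt d t (fun a : Steps d t =>
            pos d 0 a t = 0 ∧ ∀ i, 1 ≤ i → i < t → pos d 0 a i ≠ 0) : ℝ)
          * cnt d (n-t) (fun b => k ≤ Nret d (n-t) b) := by
      exact_mod_cast main
    calc (cnt d n (fun s => k+1 ≤ Nret d n s) : ℝ)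
        ≤ ∑ t ∈ Finset.Icc 1 n, (cnt d t (fun a : Steps d t =>
            pos d 0 a t = 0 ∧ ∀ i, 1 ≤ i → i < t → pos d 0 a i ≠ 0) : ℝ)
          * cnt d (n-t) (fun b => k ≤ Nret d (n-t) b) := mainR
      _ ≤ ∑ t ∈ Finset.Icc 1 n, (cnt d t (fun a : Steps d t =>
            pos d 0 a t = 0 ∧ ∀ i, 1 ≤ i → i < t → pos d 0 a i ≠ 0) : ℝ)
          * ((1 - alpha d)^k * 2^(d*(n-t))) := by
          apply Finset.sum_le_sum
          intro t _
          exact mul_le_mul_of_nonneg_left (IH (n-t)) (by positivity)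
      _ = (1 - alpha d)^k * ∑ t ∈ Finset.Icc 1 n, (cnt d t (fun a : Steps d t =>
            pos d 0 a t = 0 ∧ ∀ i, 1 ≤ i → i < t → pos d 0 a i ≠ 0) : ℝ) * 2^(d*(n-t)) := by
          rw [Finset.mul_sum]
          apply Finset.sum_congr rfl
          intro t _
          ring
      _ ≤ (1 - alpha d)^k * ((1 - alpha d) * 2^(d*n)) := by
          apply mul_le_mul_of_nonneg_left ?_ (by positivity)
          have := first_return_sum d n
          push_cast at this ⊢
          exact this
      _ = (1 - alpha d)^(k+1) * 2^(d*n) := by ring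

lemma sum_ite_Nret (n : ℕ) (s : Steps d n) (c : ℝ) :
    ∑ j ∈ Finset.Icc 1 n, (if pos d 0 s j = 0 then c else 0) = (Nret d n s : ℝ) * c := by
  rw [← Finset.sum_filter, Finset.sum_const]
  unfold Nret
  rw [nsmul_eq_mul]

lemma ham_le (lam h : ℝ) (hlam : 0 < lam) (om et : ℤ → ℝ)
    (hom : ∀ i, om i = 1 ∨ om i = -1) (n : ℕ) (s : Steps d n) :
    ham d lam h om et 0 0 s
      ≤ lam * (∑ j ∈ Finset.Icc 1 n, (om (0 + (j:ℤ)) + h))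
        + (Nret d n s : ℝ) * max 0 (2*lam*(1-h)) := by
  unfold ham
  rw [← sum_ite_Nret d n s (max 0 (2*lam*(1-h))), Finset.mul_sum, Finset.mul_sum,
    ← Finset.sum_add_distrib]
  apply Finset.sum_le_sum
  intro j hj
  unfold del
  have hmax1 := le_max_left (0:ℝ) (2*lam*(1-h))
  have hmax2 := le_max_right (0:ℝ) (2*lam*(1-h))
  rcases hom (0 + (j:ℤ)) with h1 | h1 <;> rw [h1] <;> split_ifs with h2 h3 <;>
    first
      | (exact absurd h2.1 h3)
      | nlinarith [hmax1, hmax2]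

lemma ham_noret (lam h : ℝ) (om et : ℤ → ℝ) (n : ℕ) (s : Steps d n)
    (hnr : Nret d n s = 0) :
    ham d lam h om et 0 0 s = lam * (∑ j ∈ Finset.Icc 1 n, (om (0 + (j:ℤ)) + h)) := by
  unfold Nret at hnr
  rw [Finset.card_eq_zero, Finset.filter_eq_empty_iff] at hnr
  unfold ham
  congr 1
  apply Finset.sum_congr rfl
  intro j hj
  unfold del
  rw [if_neg (fun hc => hnr hj hc.1)]
  ring

end Aux

/-- **Proposition 3.3.** Assume `d ≥ 3`, `λ > 0` and `h > 1 - (1/(2λ)) log(1/(1-α(d)))`.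
Then there is a finite constant `C` (depending only on `d, λ, h`) such that for all
`n ≥ 1` and all realizations `(ω,η)`, `E_{Q^n_{0,0}}[N_n] ≤ C`; in particular
`limsup_{n→∞} E_{Q^n_{0,0}}[N_n] < ∞`. -/
theorem expected_returns_bounded
    (d : ℕ) (hd : 3 ≤ d) (lam h : ℝ) (hlam : 0 < lam)
    (hh : 1 - (1 / (2 * lam)) * Real.log (1 / (1 - alpha d)) < h) :
    ∃ C : ℝ, ∀ om et : ℤ → ℝ,
      (∀ i, om i = 1 ∨ om i = -1) → (∀ i, et i = 1 ∨ et i = -1) →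
      (∀ n : ℕ, 1 ≤ n →
        (∑ s : Steps d n, (Nret d n s : ℝ) * Real.exp (ham d lam h om et 0 0 s)) /
          (∑ s : Steps d n, Real.exp (ham d lam h om et 0 0 s)) ≤ C) ∧
      Filter.limsup (fun n : ℕ =>
        (∑ s : Steps d n, (Nret d n s : ℝ) * Real.exp (ham d lam h om et 0 0 s)) /
          (∑ s : Steps d n, Real.exp (ham d lam h om et 0 0 s))) atTop ≤ C := by
  have ha0 : (0:ℝ) < 1 - 3*Real.sqrt 3/8 := by linarith [sqrt3_lt]
  have halpha0 : 0 < alpha d := alpha_pos d hd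
  have halpha1 : alpha d < 1 := alpha_lt_one d hd
  have halgea0 : 1 - 3*Real.sqrt 3/8 ≤ alpha d := alpha_ge d hd
  set mu : ℝ := max 0 (2*lam*(1-h)) with hmudef
  have hmu0 : 0 ≤ mu := le_max_left _ _
  set B : ℝ := (1 - alpha d) * Real.exp mu with hbdef
  have hB0 : 0 ≤ B := mul_nonneg (by linarith) (le_of_lt (Real.exp_pos _))
  have hB1 : B < 1 := by
    rcases le_or_gt 1 h with hc | hc
    · have : mu = 0 := max_eq_left (by nlinarith)
      rw [hbdef, this, Real.exp_zero, mul_one]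
      linarith
    · have hmueq : mu = 2*lam*(1-h) := max_eq_right (by nlinarith)
      have hlog : Real.log (1/(1 - alpha d)) = - Real.log (1 - alpha d) := by
        rw [one_div, Real.log_inv]
      have h2l : (0:ℝ) < 2*lam := by linarith
      have hineq : mu < - Real.log (1 - alpha d) := by
        rw [hlog] at hh
        have h3 : 1 - h < (1/(2*lam)) * (-Real.log (1 - alpha d)) := by linarith
        have h4 : 2*lam*(1-h) < 2*lam*((1/(2*lam)) * (-Real.log (1-alpha d))) :=
          mul_lt_mul_of_pos_left h3 h2l
        have h5 : 2*lam*((1/(2*lam)) * (-Real.log (1-alpha d))) = -Real.log (1-alpha d) := by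
          field_simp
        rw [hmueq]
        linarith
      have h1a : (0:ℝ) < 1 - alpha d := by linarith
      have : 1 - alpha d < Real.exp (-mu) := by
        rw [← Real.exp_log h1a]
        exact Real.exp_lt_exp.mpr (by linarith)
      calc B < Real.exp (-mu) * Real.exp mu :=
            mul_lt_mul_of_pos_right this (Real.exp_pos _)
        _ = 1 := by rw [← Real.exp_add]; simp
  have hB2 : (0:ℝ) < (1-B)^2 := by
    have : (0:ℝ) < 1 - B := by linarith
    positivity
  set C : ℝ := (B/(1-B)^2) / (1 - 3*Real.sqrt 3/8) with hCdef
  have hC0 : 0 ≤ C := by positivity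
  refine ⟨C, ?_⟩
  intro om et hom het
  -- the uniform bound, for every n
  have key : ∀ n : ℕ,
      (∑ s : Steps d n, (Nret d n s : ℝ) * Real.exp (ham d lam h om et 0 0 s)) /
        (∑ s : Steps d n, Real.exp (ham d lam h om et 0 0 s)) ≤ C := by
    intro n
    classical
    set T : ℝ := ∑ j ∈ Finset.Icc 1 n, (om (0 + (j:ℤ)) + h) with hTdef
    have hexpT : (0:ℝ) < Real.exp (lam * T) := Real.exp_pos _
    -- denominator lower bound
    have hden : Real.exp (lam*T) * ((1 - 3*Real.sqrt 3/8) * 2^(d*n))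
        ≤ ∑ s : Steps d n, Real.exp (ham d lam h om et 0 0 s) := by
      have hsub : ∑ s ∈ Finset.univ.filter (fun s : Steps d n => Nret d n s = 0),
          Real.exp (ham d lam h om et 0 0 s)
          ≤ ∑ s : Steps d n, Real.exp (ham d lam h om et 0 0 s) :=
        Finset.sum_le_sum_of_subset_of_nonneg (Finset.filter_subset _ _)
          (fun s _ _ => le_of_lt (Real.exp_pos _))
      have heq : ∑ s ∈ Finset.univ.filter (fun s : Steps d n => Nret d n s = 0),
          Real.exp (ham d lam h om et 0 0 s)
          = ((Finset.univ.filter (fun s : Steps d n => Nret d n s = 0)).card : ℝ)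
            * Real.exp (lam*T) := by
        rw [Finset.sum_congr rfl (fun s hs => by
          rw [ham_noret d lam h om et n s (Finset.mem_filter.mp hs).2, ← hTdef])]
        rw [Finset.sum_const, nsmul_eq_mul]
      have hcard : ((1 - 3*Real.sqrt 3/8) * 2^(d*n))
          ≤ ((Finset.univ.filter (fun s : Steps d n => Nret d n s = 0)).card : ℝ) := by
        have e1 : (Finset.univ.filter (fun s : Steps d n => Nret d n s = 0)).card
            = cnt d n (fun s => ∀ i, 1 ≤ i → i ≤ n → pos d 0 s i ≠ 0) := by
          rw [card_filter_eq_cnt]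
          apply cnt_congr
          intro s
          unfold Nret
          rw [Finset.card_eq_zero, Finset.filter_eq_empty_iff]
          constructor
          · intro hx i h1 h2
            exact hx (Finset.mem_Icc.mpr ⟨h1, h2⟩)
          · intro hx i hi
            rw [Finset.mem_Icc] at hi
            exact hx i hi.1 hi.2
        rw [e1]
        have e2 : (cnt d n (fun s => ∀ i, 1 ≤ i → i ≤ n → pos d 0 s i ≠ 0) : ℝ)
            = noReturn d n * 2^(d*n) := by
          rw [noReturn_eq]
          field_simp
        rw [e2]
        have := alpha_le d n
        have h2n : (0:ℝ) ≤ 2^(d*n) := by positivity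
        nlinarith
      calc Real.exp (lam*T) * ((1 - 3*Real.sqrt 3/8) * 2^(d*n))
          ≤ Real.exp (lam*T) * ((Finset.univ.filter
              (fun s : Steps d n => Nret d n s = 0)).card : ℝ) :=
            mul_le_mul_of_nonneg_left hcard (le_of_lt hexpT)
        _ = ∑ s ∈ Finset.univ.filter (fun s : Steps d n => Nret d n s = 0),
              Real.exp (ham d lam h om et 0 0 s) := by rw [heq]; ring
        _ ≤ _ := hsub
    -- numerator upper bound
    have hnum : ∑ s : Steps d n, (Nret d n s : ℝ) * Real.exp (ham d lam h om et 0 0 s)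
        ≤ Real.exp (lam*T) * ((B/(1-B)^2) * 2^(d*n)) := by
      have hterm : ∀ s : Steps d n, (Nret d n s : ℝ) * Real.exp (ham d lam h om et 0 0 s)
          ≤ Real.exp (lam*T) * ((Nret d n s : ℝ) * (Real.exp mu)^(Nret d n s)) := by
        intro s
        have h1 : ham d lam h om et 0 0 s ≤ lam*T + (Nret d n s : ℝ) * mu := by
          rw [hTdef]
          exact ham_le d lam h hlam om et hom n s
        have h2 : Real.exp (ham d lam h om et 0 0 s)
            ≤ Real.exp (lam*T) * (Real.exp mu)^(Nret d n s) := by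
          rw [← Real.exp_nat_mul, ← Real.exp_add]
          exact Real.exp_le_exp.mpr (by linarith)
        calc (Nret d n s : ℝ) * Real.exp (ham d lam h om et 0 0 s)
            ≤ (Nret d n s : ℝ) * (Real.exp (lam*T) * (Real.exp mu)^(Nret d n s)) :=
              mul_le_mul_of_nonneg_left h2 (Nat.cast_nonneg _)
          _ = Real.exp (lam*T) * ((Nret d n s : ℝ) * (Real.exp mu)^(Nret d n s)) := by ring
      have hgroup : ∑ s : Steps d n, (Nret d n s : ℝ) * (Real.exp mu)^(Nret d n s)
          ≤ (B/(1-B)^2) * 2^(d*n) := by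
        have hfib := Finset.sum_fiberwise_of_maps_to
          (g := fun s : Steps d n => Nret d n s) (t := Finset.range (n+1))
          (s := Finset.univ)
          (fun s _ => Finset.mem_range.mpr (Nat.lt_succ_of_le (Nret_le d n s)))
          (fun s => (Nret d n s : ℝ) * (Real.exp mu)^(Nret d n s))
        rw [← hfib]
        have hinner : ∀ k ∈ Finset.range (n+1),
            ∑ s ∈ Finset.univ.filter (fun s : Steps d n => Nret d n s = k),
              (Nret d n s : ℝ) * (Real.exp mu)^(Nret d n s)
            ≤ (k:ℝ) * B^k * 2^(d*n) := by
          intro k _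
          have e1 : ∑ s ∈ Finset.univ.filter (fun s : Steps d n => Nret d n s = k),
              (Nret d n s : ℝ) * (Real.exp mu)^(Nret d n s)
              = ((Finset.univ.filter (fun s : Steps d n => Nret d n s = k)).card : ℝ)
                * ((k:ℝ) * (Real.exp mu)^k) := by
            rw [Finset.sum_congr rfl (fun s hs => by
              rw [(Finset.mem_filter.mp hs).2])]
            rw [Finset.sum_const, nsmul_eq_mul]
          rw [e1]
          have hcard2 : ((Finset.univ.filter (fun s : Steps d n => Nret d n s = k)).card : ℝ)
              ≤ (1 - alpha d)^k * 2^(d*n) := by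
            have e2 : (Finset.univ.filter (fun s : Steps d n => Nret d n s = k)).card
                ≤ cnt d n (fun s => k ≤ Nret d n s) := by
              rw [card_filter_eq_cnt]
              exact cnt_mono d _ _ (fun s hs => le_of_eq hs.symm)
            calc ((Finset.univ.filter (fun s : Steps d n => Nret d n s = k)).card : ℝ)
                ≤ (cnt d n (fun s => k ≤ Nret d n s) : ℝ) := by exact_mod_cast e2
              _ ≤ (1 - alpha d)^k * 2^(d*n) := renewal d k n
          have hkr : (0:ℝ) ≤ (k:ℝ) * (Real.exp mu)^k := by positivity
          calc ((Finset.univ.filter (fun s : Steps d n => Nret d n s = k)).card : ℝ)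
                * ((k:ℝ) * (Real.exp mu)^k)
              ≤ ((1 - alpha d)^k * 2^(d*n)) * ((k:ℝ) * (Real.exp mu)^k) :=
                mul_le_mul_of_nonneg_right hcard2 hkr
            _ = (k:ℝ) * B^k * 2^(d*n) := by
                rw [hbdef, mul_pow]
                ring
        calc ∑ k ∈ Finset.range (n+1),
              ∑ s ∈ Finset.univ.filter (fun s : Steps d n => Nret d n s = k),
                (Nret d n s : ℝ) * (Real.exp mu)^(Nret d n s)
            ≤ ∑ k ∈ Finset.range (n+1), (k:ℝ) * B^k * 2^(d*n) :=
              Finset.sum_le_sum hinner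
          _ = (∑ k ∈ Finset.range (n+1), (k:ℝ) * B^k) * 2^(d*n) := by
              rw [← Finset.sum_mul]
          _ ≤ (B/(1-B)^2) * 2^(d*n) := by
              apply mul_le_mul_of_nonneg_right ?_ (by positivity)
              have hha : HasSum (fun k : ℕ => (k:ℝ) * B^k) (B/(1-B)^2) :=
                hasSum_coe_mul_geometric_of_norm_lt_one
                  (by rwa [Real.norm_eq_abs, abs_of_nonneg hB0])
              exact sum_le_hasSum _ (fun k _ => by positivity) hha
      calc ∑ s : Steps d n, (Nret d n s : ℝ) * Real.exp (ham d lam h om et 0 0 s)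
          ≤ ∑ s : Steps d n, Real.exp (lam*T)
              * ((Nret d n s : ℝ) * (Real.exp mu)^(Nret d n s)) :=
            Finset.sum_le_sum (fun s _ => hterm s)
        _ = Real.exp (lam*T) * ∑ s : Steps d n, (Nret d n s : ℝ)
              * (Real.exp mu)^(Nret d n s) := by rw [← Finset.mul_sum]
        _ ≤ Real.exp (lam*T) * ((B/(1-B)^2) * 2^(d*n)) :=
            mul_le_mul_of_nonneg_left hgroup (le_of_lt hexpT)
    -- combine
    have hdenpos : (0:ℝ) < ∑ s : Steps d n, Real.exp (ham d lam h om et 0 0 s) := by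
      apply Finset.sum_pos (fun s _ => Real.exp_pos _)
      exact Finset.univ_nonempty
    rw [div_le_iff₀ hdenpos]
    calc ∑ s : Steps d n, (Nret d n s : ℝ) * Real.exp (ham d lam h om et 0 0 s)
        ≤ Real.exp (lam*T) * ((B/(1-B)^2) * 2^(d*n)) := hnum
      _ = C * (Real.exp (lam*T) * ((1 - 3*Real.sqrt 3/8) * 2^(d*n))) := by
          have hCa : C * (1 - 3*Real.sqrt 3/8) = B/(1-B)^2 := by
            rw [hCdef]
            exact div_mul_cancel₀ _ (ne_of_gt ha0)
          rw [← hCa]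
          ring
      _ ≤ C * (∑ s : Steps d n, Real.exp (ham d lam h om et 0 0 s)) :=
          mul_le_mul_of_nonneg_left hden hC0
  refine ⟨fun n _ => key n, ?_⟩
  apply Filter.limsup_le_of_le
  · refine Filter.IsBoundedUnder.isCoboundedUnder_le ?_
    refine Filter.isBoundedUnder_of ⟨0, fun n => ?_⟩
    have hdenpos : (0:ℝ) ≤ ∑ s : Steps d n, Real.exp (ham d lam h om et 0 0 s) :=
      Finset.sum_nonneg (fun s _ => le_of_lt (Real.exp_pos _))
    have hnumpos : (0:ℝ) ≤ ∑ s : Steps d n, (Nret d n s : ℝ)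
        * Real.exp (ham d lam h om et 0 0 s) :=
      Finset.sum_nonneg (fun s _ => mul_nonneg (Nat.cast_nonneg _)
        (le_of_lt (Real.exp_pos _)))
    exact div_nonneg hnumpos hdenpos
  · exact Filter.Eventually.of_forall key


end Hetero
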